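/- For k ≥ 2, the formal power series identity F_k(x,y)·(y − xy² − xy + (xy)^{k+1}) = y(1 − (xy)^k) holds, where F_k(x,y) = Σ_{n,m} a_{n,m} x^n y^m and a_{n,m} counts binary words of length n avoiding k consecutive 1s with exactly m ones. -/

import Mathlib

def AvoidsOnes (k : ℕ) (w : List Bool) : Prop :=
  ¬ (List.replicate k true <:+: w)

instance (k : ℕ) (w : List Bool) : Decidable (AvoidsOnes k w) :=
  inferInstanceAs (Decidable ¬ _)

/-- `a k n m`: number of binary words of length `n` avoiding `k` consecutive
ones and containing exactly `m` ones. -/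
def a (k n m : ℕ) : ℕ :=
  (Finset.univ.filter (fun w : Fin n → Bool =>
    AvoidsOnes k (List.ofFn w) ∧ (List.ofFn w).count true = m)).card

/-- The bivariate generating function `F_k(x,y) = ∑ a_{n,m} x^n y^m` as a
multivariate formal power series, where `x` is variable `0` and `y` is
variable `1`. -/
def F (k : ℕ) : MvPowerSeries (Fin 2) ℚ :=
  fun e => (a k (e 0) (e 1) : ℚ)

lemma rep_infix_concat_false {k : ℕ} (hk : 1 ≤ k) (l : List Bool) :
    (List.replicate k true <:+: l ++ [false]) ↔ List.replicate k true <:+: l := by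
  rw [List.infix_concat_iff]
  constructor
  · rintro (h | h)
    · rcases List.suffix_concat_iff.mp h with h | ⟨t, ht, -⟩
      · exact absurd h (by simp [List.replicate_eq_nil_iff]; omega)
      · have : (false : Bool) ∈ List.replicate k true := ht ▸ (by simp)
        simp at this
    · exact h
  · exact Or.inr

lemma suffix_append_singleton {l t : List Bool} {b : Bool} (h : t <:+ l) :
    t ++ [b] <:+ l ++ [b] := by
  obtain ⟨s, rfl⟩ := h
  exact ⟨s, by simp⟩

lemma rep_infix_concat_true {k : ℕ} (hk : 1 ≤ k) (l : List Bool) :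
    (List.replicate k true <:+: l ++ [true]) ↔
      (List.replicate k true <:+: l) ∨ (List.replicate (k-1) true <:+ l) := by
  obtain ⟨j, rfl⟩ : ∃ j, k = j + 1 := ⟨k - 1, by omega⟩
  rw [List.infix_concat_iff]
  simp only [Nat.add_sub_cancel]
  constructor
  · rintro (h | h)
    · right
      rw [List.replicate_succ'] at h
      rcases List.suffix_concat_iff.mp h with h | ⟨t, ht, hs⟩
      · simp at h
      · rwa [List.append_cancel_right ht.symm] at hs
    · exact Or.inl h
  · rintro (h | h)
    · exact Or.inr h
    · exact Or.inl ((List.replicate_succ' (n := j) (a := true)) ▸ suffix_append_singleton h)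

lemma avoids_concat_false {k : ℕ} (hk : 1 ≤ k) (l : List Bool) :
    AvoidsOnes k (l ++ [false]) ↔ AvoidsOnes k l := by
  unfold AvoidsOnes; rw [rep_infix_concat_false hk]

lemma avoids_concat_true {k : ℕ} (hk : 1 ≤ k) (l : List Bool) :
    AvoidsOnes k (l ++ [true]) ↔
      AvoidsOnes k l ∧ ¬ (List.replicate (k-1) true <:+ l) := by
  unfold AvoidsOnes; rw [rep_infix_concat_true hk]; tauto

lemma true_suffix_of_rep_suffix {j : ℕ} (hj : 1 ≤ j) {l : List Bool}
    (h : List.replicate j true <:+ l) : [true] <:+ l := by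
  refine List.IsSuffix.trans ?_ h
  have : List.replicate j true = List.replicate (j-1) true ++ [true] := by
    rw [← List.replicate_succ']; congr 1; omega
  exact this ▸ ⟨_, rfl⟩

lemma avoids_append_replicate {k : ℕ} (hk : 2 ≤ k) {c : ℕ} (hc : c ≤ k - 1)
    {u : List Bool} (hu : ¬ ([true] <:+ u)) :
    AvoidsOnes k (u ++ List.replicate c true) ↔ AvoidsOnes k u := by
  induction c with
  | zero => simp
  | succ c ih =>
    rw [List.replicate_succ', ← List.append_assoc, avoids_concat_true (by omega),
      ih (by omega)]
    have hns : ¬ (List.replicate (k-1) true <:+ u ++ List.replicate c true) := by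
      intro h
      have hsplit : List.replicate (k-1) true
          = List.replicate (k-1-c) true ++ List.replicate c true := by
        rw [← List.replicate_add]; congr 1; omega
      rw [hsplit] at h
      obtain ⟨s, hs⟩ := h
      rw [← List.append_assoc] at hs
      exact hu (true_suffix_of_rep_suffix (by omega) ⟨s, List.append_cancel_right hs⟩)
    tauto

def LB (n : ℕ) : Finset (List Bool) :=
  (Finset.univ : Finset (Fin n → Bool)).image List.ofFn

lemma mem_LB {n : ℕ} {l : List Bool} : l ∈ LB n ↔ l.length = n := by
  constructor
  · rintro h
    obtain ⟨w, -, rfl⟩ := Finset.mem_image.mp h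
    simp
  · rintro rfl
    exact Finset.mem_image.mpr ⟨l.get, Finset.mem_univ _, List.ofFn_get l⟩

def cntL (n : ℕ) (p : List Bool → Prop) [DecidablePred p] : ℕ :=
  ((LB n).filter p).card

lemma a_eq (k n m : ℕ) :
    a k n m = cntL n (fun l => AvoidsOnes k l ∧ l.count true = m) := by
  unfold a cntL LB
  rw [Finset.filter_image, Finset.card_image_of_injective _ (fun w w' h => List.ofFn_inj.mp h)]

lemma cntL_bij {n₁ n₂ : ℕ} {p₁ p₂ : List Bool → Prop} [DecidablePred p₁] [DecidablePred p₂]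
    (f g : List Bool → List Bool)
    (hf : ∀ l, l.length = n₁ → p₁ l → (f l).length = n₂ ∧ p₂ (f l))
    (hg : ∀ l, l.length = n₂ → p₂ l → (g l).length = n₁ ∧ p₁ (g l))
    (hgf : ∀ l, l.length = n₁ → p₁ l → g (f l) = l)
    (hfg : ∀ l, l.length = n₂ → p₂ l → f (g l) = l) :
    cntL n₁ p₁ = cntL n₂ p₂ := by
  unfold cntL
  refine Finset.card_bij' (fun l _ => f l) (fun l _ => g l) ?_ ?_ ?_ ?_ <;>
    intro l hl <;>
    obtain ⟨h1, h2⟩ := Finset.mem_filter.mp hl <;>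
    rw [mem_LB] at h1
  · exact Finset.mem_filter.mpr ⟨mem_LB.mpr (hf l h1 h2).1, (hf l h1 h2).2⟩
  · exact Finset.mem_filter.mpr ⟨mem_LB.mpr (hg l h1 h2).1, (hg l h1 h2).2⟩
  · exact hgf l h1 h2
  · exact hfg l h1 h2

lemma cntL_split {n : ℕ} (p q : List Bool → Prop) [DecidablePred p] [DecidablePred q] :
    cntL n p = cntL n (fun l => p l ∧ q l) + cntL n (fun l => p l ∧ ¬ q l) := by
  unfold cntL
  rw [← Finset.filter_filter, ← Finset.filter_filter]
  exact (Finset.card_filter_add_card_filter_not q).symm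

lemma cntL_zero (p : List Bool → Prop) [DecidablePred p] :
    cntL 0 p = if p [] then 1 else 0 := by
  unfold cntL
  have : LB 0 = {[]} := by
    ext l; simp [mem_LB, List.length_eq_zero_iff]
  rw [this, Finset.filter_singleton]
  split <;> simp

lemma cntL_congr {n : ℕ} (p q : List Bool → Prop) [DecidablePred p] [DecidablePred q]
    (h : ∀ l : List Bool, l.length = n → (p l ↔ q l)) : cntL n p = cntL n q := by
  unfold cntL
  congr 1
  apply Finset.filter_congr
  intro l hl
  simpa using h l (mem_LB.mp hl)

def ngL (k n m : ℕ) : ℕ :=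
  cntL n (fun l => AvoidsOnes k l ∧ l.count true = m ∧ ¬ ([true] <:+ l))
def badL (k n m : ℕ) : ℕ :=
  cntL n (fun l => AvoidsOnes k l ∧ l.count true = m ∧ List.replicate (k-1) true <:+ l)

lemma ends_false {n : ℕ} {l : List Bool} (hl : l.length = n + 1)
    (h : ¬ ([true] <:+ l)) : l.dropLast ++ [false] = l := by
  have hne : l ≠ [] := by intro h'; simp [h'] at hl
  have hgl : l.getLast hne = false := by
    cases hb : l.getLast hne
    · rfl
    · exact absurd ⟨l.dropLast, by rw [← hb]; exact List.dropLast_append_getLast hne⟩ h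
  rw [← hgl]
  exact List.dropLast_append_getLast hne

lemma not_true_suffix_concat_false (u : List Bool) : ¬ ([true] <:+ u ++ [false]) := by
  rintro ⟨s, hs⟩
  have := congrArg List.getLast? hs
  simp at this

lemma ngL_succ {k n m : ℕ} (hk : 1 ≤ k) : ngL k (n + 1) m = a k n m := by
  rw [a_eq]
  refine cntL_bij List.dropLast (· ++ [false]) ?_ ?_ ?_ ?_
  · rintro l hl ⟨hA, hc, hE⟩
    have hd := ends_false hl hE
    rw [← hd] at hA hc
    rw [avoids_concat_false hk] at hA
    refine ⟨by simp [hl], hA, by simpa using hc⟩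
  · rintro u hu ⟨hA, hc⟩
    exact ⟨by simp [hu], (avoids_concat_false hk _).mpr hA, by simpa using hc,
      not_true_suffix_concat_false u⟩
  · rintro l hl ⟨-, -, hE⟩
    exact ends_false hl hE
  · rintro u hu ⟨-, -⟩
    exact List.dropLast_concat ..

lemma endsTrue_eq {k n m : ℕ} (hk : 1 ≤ k) :
    cntL (n + 1) (fun l => AvoidsOnes k l ∧ l.count true = m + 1 ∧ [true] <:+ l)
      = cntL n (fun l => AvoidsOnes k l ∧ l.count true = m
          ∧ ¬ (List.replicate (k-1) true <:+ l)) := by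
  refine cntL_bij List.dropLast (· ++ [true]) ?_ ?_ ?_ ?_
  · rintro l hl ⟨hA, hc, t, ht⟩
    have hd : l.dropLast ++ [true] = l := by rw [← ht]; simp
    rw [← hd] at hA hc
    rw [avoids_concat_true hk] at hA
    refine ⟨by simp [hl], hA.1, by simpa using hc, hA.2⟩
  · rintro u hu ⟨hA, hc, hs⟩
    refine ⟨by simp [hu], (avoids_concat_true hk _).mpr ⟨hA, hs⟩, by simpa using hc, u, rfl⟩
  · rintro l hl ⟨-, -, t, ht⟩
    rw [← ht]; simp
  · rintro u hu -
    exact List.dropLast_concat ..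

lemma key {k : ℕ} (hk : 2 ≤ k) (n q : ℕ) :
    a k (n + 1) (q + 1) + badL k n q = a k n q + a k n (q + 1) := by
  have hk1 : 1 ≤ k := by omega
  have h1 : a k (n+1) (q+1)
      = cntL (n+1) (fun l => AvoidsOnes k l ∧ l.count true = q + 1 ∧ [true] <:+ l)
        + ngL k (n+1) (q+1) := by
    rw [a_eq, cntL_split _ (fun l => [true] <:+ l), ngL]
    congr 1 <;> exact cntL_congr _ _ (fun l _ => by tauto)
  have h2 : a k n q
      = cntL n (fun l => AvoidsOnes k l ∧ l.count true = q
            ∧ ¬ (List.replicate (k-1) true <:+ l)) + badL k n q := by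
    rw [a_eq, cntL_split _ (fun l => List.replicate (k-1) true <:+ l), badL, Nat.add_comm]
    congr 1 <;> exact cntL_congr _ _ (fun l _ => by tauto)
  rw [h1, ngL_succ hk1, endsTrue_eq hk1, h2]
  ring

lemma badL_shift {k n m : ℕ} (hk : 2 ≤ k) :
    badL k (n + (k-1)) (m + (k-1)) = ngL k n m := by
  refine cntL_bij (fun l => l.take n) (· ++ List.replicate (k-1) true) ?_ ?_ ?_ ?_
  · rintro l hl ⟨hA, hc, hs⟩
    obtain ⟨u, hu⟩ := hs
    have hul : u.length = n := by
      have := congrArg List.length hu; simp at this; omega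
    have htake : l.take n = u := by
      rw [← hu, ← hul, List.take_left]
    have hE : ¬ ([true] <:+ u) := by
      rintro ⟨v, hv⟩
      apply hA
      have : List.replicate k true <:+ l := by
        refine ⟨v, ?_⟩
        rw [← hu, ← hv]
        have : List.replicate k true = [true] ++ List.replicate (k-1) true := by
          have : k = (k-1) + 1 := by omega
          rw [this]; simp [List.replicate_succ]
        rw [this]; simp
      exact this.isInfix
    rw [htake]
    refine ⟨hul, ?_, ?_, hE⟩
    · exact (avoids_append_replicate hk le_rfl hE).mp (hu ▸ hA)
    · rw [← hu] at hc; simp [List.count_replicate] at hc; omega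
  · rintro u hu ⟨hA, hc, hE⟩
    refine ⟨by simp [hu], (avoids_append_replicate hk le_rfl hE).mpr hA,
      by simp [List.count_replicate, hc], ⟨u, rfl⟩⟩
  · rintro l hl ⟨-, -, hs⟩
    obtain ⟨u, hu⟩ := hs
    have hul : u.length = n := by
      have := congrArg List.length hu; simp at this; omega
    rw [← hu, ← hul, List.take_left]
  · rintro u hu -
    rw [← hu, List.take_left]

lemma badL_zero {k n m : ℕ} (h : n < k - 1 ∨ m < k - 1) : badL k n m = 0 := by
  unfold badL cntL
  rw [Finset.card_eq_zero, Finset.filter_eq_empty_iff]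
  rintro l hl ⟨hA, hc, hs⟩
  rw [mem_LB] at hl
  have h1 : k - 1 ≤ n := by have := hs.length_le; simpa [hl] using this
  have h2 : k - 1 ≤ m := by
    have := hs.sublist.count_le true
    simpa [List.count_replicate, hc] using this
  omega

lemma avoids_replicate_false {k n : ℕ} (hk : 1 ≤ k) :
    AvoidsOnes k (List.replicate n false) := by
  intro h
  have : (true : Bool) ∈ List.replicate n false := by
    apply h.sublist.subset
    simp; omega
  simp at this

lemma a_zero {k n : ℕ} (hk : 1 ≤ k) : a k n 0 = 1 := by
  rw [a_eq]
  unfold cntL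
  have : (LB n).filter (fun l => AvoidsOnes k l ∧ l.count true = 0)
      = {List.replicate n false} := by
    ext l
    simp only [Finset.mem_filter, mem_LB, Finset.mem_singleton]
    constructor
    · rintro ⟨hl, -, hc⟩
      rw [List.count_eq_zero] at hc
      rw [List.eq_replicate_iff]
      exact ⟨hl, fun b hb => by cases b; rfl; exact absurd hb hc⟩
    · rintro rfl
      refine ⟨by simp, avoids_replicate_false hk, by simp [List.count_replicate]⟩
  rw [this, Finset.card_singleton]

lemma a_nil {k m : ℕ} (hk : 1 ≤ k) : a k 0 m = if m = 0 then 1 else 0 := by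
  rw [a_eq, cntL_zero]
  have : AvoidsOnes k ([] : List Bool) := by
    intro h
    rw [List.infix_nil] at h
    simp [List.replicate_eq_nil_iff] at h
    omega
  simp [this, eq_comm]

lemma ngL_zero {k m : ℕ} (hk : 1 ≤ k) : ngL k 0 m = if m = 0 then 1 else 0 := by
  rw [ngL, cntL_zero]
  have hA : AvoidsOnes k ([] : List Bool) := by
    intro h
    rw [List.infix_nil] at h
    simp [List.replicate_eq_nil_iff] at h
    omega
  have : ¬ ([true] <:+ ([] : List Bool)) := by simp
  simp [hA, this, eq_comm]

lemma natkey (k : ℕ) (hk : 2 ≤ k) (n m : ℕ) :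
    (if 1 ≤ m then a k n (m-1) else 0)
      + (if k+1 ≤ n ∧ k+1 ≤ m then a k (n-(k+1)) (m-(k+1)) else 0)
      + (if n = k ∧ m = k+1 then 1 else 0)
    = (if n = 0 ∧ m = 1 then 1 else 0)
      + (if 1 ≤ n ∧ 2 ≤ m then a k (n-1) (m-2) else 0)
      + (if 1 ≤ n ∧ 1 ≤ m then a k (n-1) (m-1) else 0) := by
  have hk1 : 1 ≤ k := by omega
  rcases m with _ | (_ | q)
  · split_ifs <;> first | omega | (exfalso; omega) | simp_all
  · -- m = 1
    rcases n with _ | n'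
    · rw [a_nil hk1]
      split_ifs <;> first | omega | (exfalso; omega) | simp_all
    · rw [a_zero hk1]
      split_ifs <;> first | omega | (exfalso; omega) | simp_all
      rw [a_zero hk1]
  · -- m = q + 2
    rcases n with _ | n'
    · rw [show q+1+1-1 = q+1 from rfl, a_nil hk1]
      split_ifs <;> first | omega | (exfalso; omega) | simp_all
    · have hbad : badL k n' q
          = (if k+1 ≤ n'+1 ∧ k+1 ≤ q+1+1
              then a k (n'+1-(k+1)) (q+1+1-(k+1)) else 0)
            + (if n'+1 = k ∧ q+1+1 = k+1 then 1 else 0) := by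
        by_cases h1 : k-1 ≤ n' ∧ k-1 ≤ q
        · obtain ⟨p, rfl⟩ : ∃ p, n' = p + (k-1) := ⟨n'-(k-1), by omega⟩
          obtain ⟨r, rfl⟩ : ∃ r, q = r + (k-1) := ⟨q-(k-1), by omega⟩
          rcases p with _ | p''
          · rw [badL_shift hk, ngL_zero hk1]
            split_ifs <;> first | omega | (exfalso; omega) | simp_all
          · rw [show p''+1+(k-1) = p''+1+(k-1) from rfl, badL_shift hk, ngL_succ hk1]
            rw [if_pos (show k+1 ≤ p''+1+(k-1)+1 ∧ k+1 ≤ r+(k-1)+1+1 by omega),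
              if_neg (show ¬(p''+1+(k-1)+1 = k ∧ r+(k-1)+1+1 = k+1) by omega)]
            have e1 : a k (p''+1+(k-1)+1-(k+1)) (r+(k-1)+1+1-(k+1)) = a k p'' r := by
              congr 1 <;> omega
            rw [e1, Nat.add_zero]
        · rw [badL_zero (by omega)]
          split_ifs <;> first | omega | (exfalso; omega) | simp_all
      rw [if_pos (show 1 ≤ q+1+1 by omega),
        if_neg (show ¬(n'+1 = 0 ∧ q+1+1 = 1) by omega),
        if_pos (show 1 ≤ n'+1 ∧ 2 ≤ q+1+1 by omega),
        if_pos (show 1 ≤ n'+1 ∧ 1 ≤ q+1+1 by omega)]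
      rw [show q+1+1-1 = q+1 from rfl, show q+1+1-2 = q from rfl,
        show n'+1-1 = n' from rfl]
      rw [add_assoc, ← hbad, key hk n' q, Nat.zero_add]

open MvPowerSeries Finsupp in
lemma fin2_le {d e : Fin 2 →₀ ℕ} : d ≤ e ↔ d 0 ≤ e 0 ∧ d 1 ≤ e 1 := by
  rw [Finsupp.le_def]
  exact ⟨fun h => ⟨h 0, h 1⟩, fun h i => by fin_cases i; exacts [h.1, h.2]⟩

lemma fin2_eq {d e : Fin 2 →₀ ℕ} : d = e ↔ d 0 = e 0 ∧ d 1 = e 1 := by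
  refine ⟨fun h => by rw [h]; exact ⟨rfl, rfl⟩, fun h => Finsupp.ext fun i => ?_⟩
  fin_cases i; exacts [h.1, h.2]

lemma coeff_F (k : ℕ) (d : Fin 2 →₀ ℕ) :
    MvPowerSeries.coeff d (F k) = (a k (d 0) (d 1) : ℚ) := rfl

open MvPowerSeries in
lemma rearranged (k : ℕ) (hk : 2 ≤ k) :
    F k * X 1 + F k * (X 0 * X 1)^(k+1) + X 1 * (X 0 * X 1)^k
      = X 1 + F k * (X 0 * X 1 ^ 2) + F k * (X 0 * X 1) := by
  have h1 : (X 1 : MvPowerSeries (Fin 2) ℚ)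
      = monomial (Finsupp.single 1 1) 1 := rfl
  have h2 : (X 0 * X 1 : MvPowerSeries (Fin 2) ℚ)^(k+1)
      = monomial (Finsupp.single 0 (k+1) + Finsupp.single 1 (k+1)) 1 := by
    rw [mul_pow, X_pow_eq, X_pow_eq, monomial_mul_monomial, one_mul]
  have h3 : (X 1 * (X 0 * X 1)^k : MvPowerSeries (Fin 2) ℚ)
      = monomial (Finsupp.single 1 1 + (Finsupp.single 0 k + Finsupp.single 1 k)) 1 := by
    rw [mul_pow, X_pow_eq, X_pow_eq, monomial_mul_monomial, h1, monomial_mul_monomial,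
      one_mul, one_mul]
  have h4 : (X 0 * X 1 ^ 2 : MvPowerSeries (Fin 2) ℚ)
      = monomial (Finsupp.single 0 1 + Finsupp.single 1 2) 1 := by
    rw [X_pow_eq]
    show monomial (Finsupp.single 0 1) 1 * _ = _
    rw [monomial_mul_monomial, one_mul]
  have h5 : (X 0 * X 1 : MvPowerSeries (Fin 2) ℚ)
      = monomial (Finsupp.single 0 1 + Finsupp.single 1 1) 1 := by
    show monomial (Finsupp.single 0 1) 1 * monomial (Finsupp.single 1 1) 1 = _
    rw [monomial_mul_monomial, one_mul]
  ext e
  rw [map_add, map_add, map_add, map_add, h2, h3, h4, h5, h1]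
  rw [coeff_mul_monomial, coeff_mul_monomial, coeff_mul_monomial, coeff_mul_monomial,
    coeff_monomial, coeff_monomial]
  simp only [coeff_F, mul_one, fin2_le, fin2_eq, Finsupp.tsub_apply, Finsupp.add_apply,
    Finsupp.single_eq_same, Finsupp.single_apply]
  norm_num
  have H := natkey k hk (e 0) (e 1)
  split_ifs with h1' h2' h3' h4' h5' h6' <;> split_ifs at H <;>
    first
      | (exfalso; omega)
      | (push_cast; push_cast at H ⊢; exact_mod_cast H)
      | (push_cast [H]; ring)
      | omega

theorem generating_function_identity (k : ℕ) (hk : 2 ≤ k) :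
    F k * (MvPowerSeries.X 1 - MvPowerSeries.X 0 * MvPowerSeries.X 1 ^ 2
        - MvPowerSeries.X 0 * MvPowerSeries.X 1
        + (MvPowerSeries.X 0 * MvPowerSeries.X 1) ^ (k + 1)) =
      MvPowerSeries.X 1 *
        (1 - (MvPowerSeries.X (0 : Fin 2) * MvPowerSeries.X 1) ^ k) := by
  have h := rearranged k hk
  linear_combination h
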